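/- Let T = ⟨Γ, L, R⟩ be an incremental rule system on presheaves over a small category C, with Γ small, and let p be a presheaf. Then T is accretive at p: for any two partial decompositions M ⊆ M' of p, the induced morphism T̃_p(M) ⟶ T̃_p(M') — the unique morphism commuting with the colimit components, i.e. sending the component of T̃_p(M) at each object n of M̃ to the component of T̃_p(M') at n — is a monomorphism. -/

import Mathlib

open CategoryTheory CategoryTheory.Limits

universe u

variable (C : Type u) [SmallCategory C]

/-- The category of presheaves over `C`. -/
abbrev GM := Cᵒᵖ ⥤ Type u

/-- A rule system `⟨Γ, L, R⟩` on presheaves over `C`: a small category `Γ` of rules,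
a full and faithful left-hand-side functor `L` sending every morphism to a monomorphism,
and a right-hand-side functor `R` sending every morphism to a monomorphism. -/
structure RuleSystem where
  Γ : Type u
  [catΓ : SmallCategory Γ]
  L : Γ ⥤ GM C
  R : Γ ⥤ GM C
  [fullL : L.Full]
  [faithfulL : L.Faithful]
  monoL : ∀ {a b : Γ} (e : a ⟶ b), Mono (L.map e)
  monoR : ∀ {a b : Γ} (e : a ⟶ b), Mono (R.map e)

attribute [instance] RuleSystem.catΓ RuleSystem.fullL RuleSystem.faithfulL

variable {C}

/-- The instance category `L/p`: objects are pairs `⟨γ, m⟩` with `m : L(γ) ⟶ p` a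
monomorphism; morphisms `⟨γ, m⟩ ⟶ ⟨γ', m'⟩` are the morphisms `e : γ ⟶ γ'` of `Γ` with
`m' ∘ L(e) = m`. -/
def Inst (T : RuleSystem C) (p : GM C) :=
  ObjectProperty.FullSubcategory (fun f : CostructuredArrow T.L p => Mono f.hom)

instance (T : RuleSystem C) (p : GM C) : Category (Inst T p) :=
  ObjectProperty.FullSubcategory.category _

/-- The diagram `D_T(p) : L/p ⥤ GM` sending `⟨γ, m⟩` to `R(γ)` and `e` to `R(e)`. -/
def DT (T : RuleSystem C) (p : GM C) : Inst T p ⥤ GM C :=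
  ObjectProperty.ι _ ⋙ CostructuredArrow.proj T.L p ⋙ T.R

/-- An object of the instance category is maximal if every morphism out of it admits a
morphism back. -/
def MaximalInst {T : RuleSystem C} {p : GM C} (n : Inst T p) : Prop :=
  ∀ m : Inst T p, (n ⟶ m) → Nonempty (m ⟶ n)

/-- Objects of the subcategory `M̃` associated to a set `M` of instances: the elements of
`M` together with all instances admitting a morphism into some element of `M`. -/
def InTilde {T : RuleSystem C} {p : GM C} (M : Set (Inst T p)) (n : Inst T p) : Prop :=
  n ∈ M ∨ ∃ m ∈ M, Nonempty (n ⟶ m)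

theorem inTilde_mono {T : RuleSystem C} {p : GM C} {M M' : Set (Inst T p)} (h : M ⊆ M')
    {n : Inst T p} : InTilde M n → InTilde M' n := by
  rintro (hn | ⟨m, hm, hnm⟩)
  · exact Or.inl (h hn)
  · exact Or.inr ⟨m, h hm, hnm⟩

/-- The subcategory `M̃` of `L/p`: its objects are the elements of `M` together with all
instances admitting a morphism into some element of `M`; its non-identity morphisms are the
morphisms of `L/p` whose target lies in `M`. -/
def TildeCat (T : RuleSystem C) (p : GM C) (M : Set (Inst T p)) :=
  {n : Inst T p // InTilde M n}

instance (T : RuleSystem C) (p : GM C) (M : Set (Inst T p)) : Category (TildeCat T p M) where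
  Hom n n' := {e : n.1 ⟶ n'.1 // n'.1 ∈ M ∨ n = n'}
  id n := ⟨𝟙 n.1, Or.inr rfl⟩
  comp {n n' n''} e f := ⟨e.1 ≫ f.1, by
    rcases f.2 with h | h
    · exact Or.inl h
    · rcases e.2 with h' | h'
      · exact Or.inl (h ▸ h')
      · exact Or.inr (h'.trans h)⟩
  id_comp f := Subtype.ext (Category.id_comp _)
  comp_id f := Subtype.ext (Category.comp_id _)
  assoc f g h := Subtype.ext (Category.assoc _ _ _)

/-- The inclusion of the subcategory `M̃` into the instance category `L/p`. -/
def tildeIncl (T : RuleSystem C) (p : GM C) (M : Set (Inst T p)) :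
    TildeCat T p M ⥤ Inst T p where
  obj n := n.1
  map e := e.1

/-- The restriction of the diagram `D_T(p)` to the subcategory `M̃`. -/
def DTilde (T : RuleSystem C) (p : GM C) (M : Set (Inst T p)) : TildeCat T p M ⥤ GM C :=
  tildeIncl T p M ⋙ DT T p


/-- Pointwise span property used in the zigzag induction. -/
def SpannedRel (T : RuleSystem C) (p : GM C) (c : Cᵒᵖ) (M' : Set (Inst T p))
    (a b : Σ j : TildeCat T p M', (T.R.obj j.1.obj.left).obj c) : Prop :=
  ∃ (n₀ : Inst T p) (e₁ : n₀ ⟶ a.1.1) (e₂ : n₀ ⟶ b.1.1)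
    (x₀ : (T.R.obj n₀.obj.left).obj c),
    (T.R.map e₁.hom.left).app c x₀ = a.2 ∧ (T.R.map e₂.hom.left).app c x₀ = b.2

/-- From a cospan of instances whose right-hand sides agree on an element, incrementality
produces a span of instances with a common element. -/
theorem span_of_cospan (T : RuleSystem C)
    (hinc : ∀ {γ₁ γ γ₂ : T.Γ} (i₁ : γ₁ ⟶ γ) (i₂ : γ₂ ⟶ γ) (c : C)
      (x₁ : yoneda.obj c ⟶ T.R.obj γ₁) (x₂ : yoneda.obj c ⟶ T.R.obj γ₂),
      x₁ ≫ T.R.map i₁ = x₂ ≫ T.R.map i₂ →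
      ∃ (γ' : T.Γ) (π₁ : γ' ⟶ γ₁) (π₂ : γ' ⟶ γ₂) (x : yoneda.obj c ⟶ T.R.obj γ'),
        π₁ ≫ i₁ = π₂ ≫ i₂ ∧ x ≫ T.R.map π₁ = x₁ ∧ x ≫ T.R.map π₂ = x₂)
    (p : GM C) {n₀ n₀' n₂ : Inst T p} (e : n₀ ⟶ n₂) (e' : n₀' ⟶ n₂) (c : Cᵒᵖ)
    (x₀ : (T.R.obj n₀.obj.left).obj c) (x₀' : (T.R.obj n₀'.obj.left).obj c)
    (h : (T.R.map e.hom.left).app c x₀ = (T.R.map e'.hom.left).app c x₀') :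
    ∃ (n'' : Inst T p) (g : n'' ⟶ n₀) (g' : n'' ⟶ n₀')
      (x : (T.R.obj n''.obj.left).obj c),
      (T.R.map g.hom.left).app c x = x₀ ∧ (T.R.map g'.hom.left).app c x = x₀' := by
  obtain ⟨γ'', π₁, π₂, x, hcomm, hx1, hx2⟩ :=
    hinc e.hom.left e'.hom.left c.unop (yonedaEquiv.symm x₀) (yonedaEquiv.symm x₀')
      (by
        apply yonedaEquiv.injective
        rw [yonedaEquiv_comp, yonedaEquiv_comp, Equiv.apply_symm_apply,
          Equiv.apply_symm_apply]
        exact h)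
  have w1 : T.L.map e.hom.left ≫ n₂.obj.hom = n₀.obj.hom := CostructuredArrow.w e.hom
  have w2 : T.L.map e'.hom.left ≫ n₂.obj.hom = n₀'.obj.hom := CostructuredArrow.w e'.hom
  have hmono : Mono (T.L.map π₁ ≫ n₀.obj.hom) := by
    haveI := T.monoL π₁
    haveI := n₀.property
    exact mono_comp _ _
  refine ⟨⟨CostructuredArrow.mk (T.L.map π₁ ≫ n₀.obj.hom), hmono⟩,
    InducedCategory.homMk (CostructuredArrow.homMk π₁ rfl),
    InducedCategory.homMk (CostructuredArrow.homMk π₂ ?_), yonedaEquiv x, ?_, ?_⟩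
  · show T.L.map π₂ ≫ n₀'.obj.hom = T.L.map π₁ ≫ n₀.obj.hom
    rw [← w1, ← w2, ← Category.assoc, ← Category.assoc, ← T.L.map_comp, ← T.L.map_comp,
      hcomm]
  · show (T.R.map π₁).app c (yonedaEquiv x) = x₀
    have := congrArg yonedaEquiv hx1
    rwa [yonedaEquiv_comp, Equiv.apply_symm_apply] at this
  · show (T.R.map π₂).app c (yonedaEquiv x) = x₀'
    have := congrArg yonedaEquiv hx2
    rwa [yonedaEquiv_comp, Equiv.apply_symm_apply] at this

/-- an incremental rule system is accretive at every presheaf `p`: for any two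
partial decompositions `M ⊆ M'` of `p`, the induced morphism `T̃_p(M) ⟶ T̃_p(M')` — the
unique morphism sending the colimit component of `T̃_p(M)` at each object `n` of `M̃` to the
component of `T̃_p(M')` at `n` — is a monomorphism. -/
theorem stmt8 (T : RuleSystem C)
    (hinc : ∀ {γ₁ γ γ₂ : T.Γ} (i₁ : γ₁ ⟶ γ) (i₂ : γ₂ ⟶ γ) (c : C)
      (x₁ : yoneda.obj c ⟶ T.R.obj γ₁) (x₂ : yoneda.obj c ⟶ T.R.obj γ₂),
      x₁ ≫ T.R.map i₁ = x₂ ≫ T.R.map i₂ →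
      ∃ (γ' : T.Γ) (π₁ : γ' ⟶ γ₁) (π₂ : γ' ⟶ γ₂) (x : yoneda.obj c ⟶ T.R.obj γ'),
        π₁ ≫ i₁ = π₂ ≫ i₂ ∧ x ≫ T.R.map π₁ = x₁ ∧ x ≫ T.R.map π₂ = x₂)
    (p : GM C) (M M' : Set (Inst T p)) (hMM' : M ⊆ M')
    (hMmax : ∀ n ∈ M, MaximalInst n) (hM'max : ∀ n ∈ M', MaximalInst n)
    (hMconn : IsConnected (TildeCat T p M)) (hM'conn : IsConnected (TildeCat T p M'))
    (f : colimit (DTilde T p M) ⟶ colimit (DTilde T p M'))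
    (hf : ∀ n : TildeCat T p M,
      colimit.ι (DTilde T p M) n ≫ f =
        colimit.ι (DTilde T p M') ⟨n.1, inTilde_mono hMM' n.2⟩) :
    Mono f := by
  suffices hmapp : ∀ X : Cᵒᵖ, Mono (f.app X) by
    haveI := hmapp; exact NatTrans.mono_of_mono_app f
  intro c
  rw [mono_iff_injective]
  intro a b hab
  let E : GM C ⥤ Type u := (evaluation Cᵒᵖ (Type u)).obj c
  let φ := preservesColimitIso E (DTilde T p M)
  let φ' := preservesColimitIso E (DTilde T p M')
  have hih : ∀ y, φ.inv (φ.hom y) = y := fun y => Iso.hom_inv_id_apply φ y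
  obtain ⟨n₁, x₁, h1⟩ := Types.jointly_surjective' (φ.hom a)
  obtain ⟨n₂, x₂, h2⟩ := Types.jointly_surjective' (φ.hom b)
  have ha : a = (colimit.ι (DTilde T p M) n₁).app c x₁ := by
    have h := ConcreteCategory.congr_hom (ι_preservesColimitIso_inv E (DTilde T p M) n₁) x₁
    calc a = φ.inv (φ.hom a) := (hih a).symm
      _ = φ.inv (colimit.ι (DTilde T p M ⋙ E) n₁ x₁) := by rw [h1]
      _ = (colimit.ι (DTilde T p M) n₁).app c x₁ := h
  have hb : b = (colimit.ι (DTilde T p M) n₂).app c x₂ := by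
    have h := ConcreteCategory.congr_hom (ι_preservesColimitIso_inv E (DTilde T p M) n₂) x₂
    calc b = φ.inv (φ.hom b) := (hih b).symm
      _ = φ.inv (colimit.ι (DTilde T p M ⋙ E) n₂ x₂) := by rw [h2]
      _ = (colimit.ι (DTilde T p M) n₂).app c x₂ := h
  -- push to the colimit over M̃'
  have hfab : (colimit.ι (DTilde T p M') ⟨n₁.1, inTilde_mono hMM' n₁.2⟩).app c x₁ =
      (colimit.ι (DTilde T p M') ⟨n₂.1, inTilde_mono hMM' n₂.2⟩).app c x₂ := by
    have t1 := ConcreteCategory.congr_hom (NatTrans.congr_app (hf n₁) c) x₁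
    have t2 := ConcreteCategory.congr_hom (NatTrans.congr_app (hf n₂) c) x₂
    simp only [NatTrans.comp_app, types_comp_apply] at t1 t2
    exact t1.symm.trans ((congrArg (ConcreteCategory.hom (f.app c)) ha).symm.trans
      (hab.trans ((congrArg (ConcreteCategory.hom (f.app c)) hb).trans t2)))
  have hcc : colimit.ι (DTilde T p M' ⋙ E) ⟨n₁.1, inTilde_mono hMM' n₁.2⟩ x₁ =
      colimit.ι (DTilde T p M' ⋙ E) ⟨n₂.1, inTilde_mono hMM' n₂.2⟩ x₂ := by
    have u1 := ConcreteCategory.congr_hom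
      (ι_preservesColimitIso_hom E (DTilde T p M') ⟨n₁.1, inTilde_mono hMM' n₁.2⟩) x₁
    have u2 := ConcreteCategory.congr_hom
      (ι_preservesColimitIso_hom E (DTilde T p M') ⟨n₂.1, inTilde_mono hMM' n₂.2⟩) x₂
    rw [← u1, ← u2]
    exact congrArg φ'.hom hfab
  have hzz := Types.colimit_eq hcc
  have main : ∀ u v : Σ j : TildeCat T p M', (DTilde T p M' ⋙ E).obj j,
      Relation.EqvGen ((DTilde T p M' ⋙ E).ColimitTypeRel) u v →
      SpannedRel T p c M' u v := by
    intro u v h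
    induction h with
    | rel u v hr =>
      obtain ⟨g, hg⟩ := hr
      refine ⟨u.1.1, 𝟙 u.1.1, g.1, u.2, ?_, hg.symm⟩
      show (T.R.map (𝟙 u.1.1.obj.left)).app c u.2 = u.2
      simp
      rfl
    | refl u =>
      refine ⟨u.1.1, 𝟙 u.1.1, 𝟙 u.1.1, u.2, ?_, ?_⟩ <;>
        · show (T.R.map (𝟙 u.1.1.obj.left)).app c u.2 = u.2
          simp
          rfl
    | symm u v _ ih =>
      obtain ⟨n₀, e₁, e₂, x₀, q1, q2⟩ := ih
      exact ⟨n₀, e₂, e₁, x₀, q2, q1⟩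
    | trans u v w _ _ ih1 ih2 =>
      obtain ⟨n₀, e₁, e₂, x₀, q1, q2⟩ := ih1
      obtain ⟨n₀', e₁', e₂', x₀', q1', q2'⟩ := ih2
      obtain ⟨n'', g, g', x, r1, r2⟩ :=
        span_of_cospan T @hinc p e₂ e₁' c x₀ x₀' (q2.trans q1'.symm)
      refine ⟨n'', g ≫ e₁, g' ≫ e₂', x, ?_, ?_⟩
      · show (T.R.map (g.hom.left ≫ e₁.hom.left)).app c x = u.2
        rw [T.R.map_comp, NatTrans.comp_app, types_comp_apply, r1]
        exact q1
      · show (T.R.map (g'.hom.left ≫ e₂'.hom.left)).app c x = w.2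
        rw [T.R.map_comp, NatTrans.comp_app, types_comp_apply, r2]
        exact q2'
  obtain ⟨n₀, e₁, e₂, x₀, q1, q2⟩ := main ⟨⟨n₁.1, inTilde_mono hMM' n₁.2⟩, x₁⟩
    ⟨⟨n₂.1, inTilde_mono hMM' n₂.2⟩, x₂⟩ hzz
  have pick : ∀ n : TildeCat T p M, ∃ m, ∃ _ : m ∈ M, Nonempty (n.1 ⟶ m) := by
    intro n
    rcases n.2 with h | ⟨m, hm, hg⟩
    · exact ⟨n.1, h, ⟨𝟙 n.1⟩⟩
    · exact ⟨m, hm, hg⟩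
  obtain ⟨mm₁, hmm₁, ⟨g₁⟩⟩ := pick n₁
  obtain ⟨mm₂, hmm₂, ⟨g₂⟩⟩ := pick n₂
  have hN₀ : InTilde M n₀ := Or.inr ⟨mm₁, hmm₁, ⟨e₁ ≫ g₁⟩⟩
  have s1 : colimit.ι (DTilde T p M ⋙ E) n₁ x₁ =
      colimit.ι (DTilde T p M ⋙ E) ⟨n₀, hN₀⟩ x₀ := by
    let Mm₁ : TildeCat T p M := ⟨mm₁, Or.inl hmm₁⟩
    let N₀ : TildeCat T p M := ⟨n₀, hN₀⟩
    let hom1 : n₁ ⟶ Mm₁ := ⟨g₁, Or.inl hmm₁⟩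
    let hom1' : N₀ ⟶ Mm₁ := ⟨e₁ ≫ g₁, Or.inl hmm₁⟩
    refine Types.colimit_sound' (F := DTilde T p M ⋙ E) hom1 hom1' ?_
    show (T.R.map g₁.hom.left).app c x₁ = (T.R.map (e₁.hom.left ≫ g₁.hom.left)).app c x₀
    rw [T.R.map_comp, NatTrans.comp_app, types_comp_apply, q1]
  have s2 : colimit.ι (DTilde T p M ⋙ E) n₂ x₂ =
      colimit.ι (DTilde T p M ⋙ E) ⟨n₀, hN₀⟩ x₀ := by
    let Mm₂ : TildeCat T p M := ⟨mm₂, Or.inl hmm₂⟩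
    let N₀ : TildeCat T p M := ⟨n₀, hN₀⟩
    let hom2 : n₂ ⟶ Mm₂ := ⟨g₂, Or.inl hmm₂⟩
    let hom2' : N₀ ⟶ Mm₂ := ⟨e₂ ≫ g₂, Or.inl hmm₂⟩
    refine Types.colimit_sound' (F := DTilde T p M ⋙ E) hom2 hom2' ?_
    show (T.R.map g₂.hom.left).app c x₂ = (T.R.map (e₂.hom.left ≫ g₂.hom.left)).app c x₀
    rw [T.R.map_comp, NatTrans.comp_app, types_comp_apply, q2]
  calc a = φ.inv (φ.hom a) := (hih a).symm
    _ = φ.inv (colimit.ι (DTilde T p M ⋙ E) n₁ x₁) := by rw [h1]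
    _ = φ.inv (colimit.ι (DTilde T p M ⋙ E) n₂ x₂) := by rw [s1, s2]
    _ = φ.inv (φ.hom b) := by rw [h2]
    _ = b := hih b
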